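/- Every cycle C_n with n ≡ 0 (mod 4) admits a locally irregular edge coloring with 2 colors. -/

import Mathlib

open Finset SimpleGraph

/-- Degree of `v` in the color class `k` of the edge coloring `c` of `G`. -/
def degIn {V K : Type*} [Fintype V] (G : SimpleGraph V) [DecidableRel G.Adj] [DecidableEq K]
    (c : Sym2 V → K) (k : K) (v : V) : ℕ :=
  (Finset.univ.filter fun w => G.Adj v w ∧ c s(v, w) = k).card

/-- `c` is a locally irregular edge coloring of the simple graph `G`. -/
def IsLIC {V K : Type*} [Fintype V] (G : SimpleGraph V) [DecidableRel G.Adj] [DecidableEq K]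
    (c : Sym2 V → K) : Prop :=
  ∀ v w, G.Adj v w → degIn G c (c s(v, w)) v ≠ degIn G c (c s(v, w)) w

/-- In the 2-multigraph `²G`, each edge of `G` carries a pair of colors (one for each
parallel copy).  `degIn2 G c k v` is the degree of `v` in the color class `k`. -/
def degIn2 {V K : Type*} [Fintype V] (G : SimpleGraph V) [DecidableRel G.Adj] [DecidableEq K]
    (c : Sym2 V → K × K) (k : K) (v : V) : ℕ :=
  ∑ w ∈ Finset.univ.filter (fun w => G.Adj v w),
    ((if (c s(v, w)).1 = k then 1 else 0) + (if (c s(v, w)).2 = k then 1 else 0))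

/-- `c` is a locally irregular edge coloring of the 2-multigraph `²G`. -/
def IsLIC2 {V K : Type*} [Fintype V] (G : SimpleGraph V) [DecidableRel G.Adj] [DecidableEq K]
    (c : Sym2 V → K × K) : Prop :=
  ∀ v w, G.Adj v w → ∀ k : K, ((c s(v, w)).1 = k ∨ (c s(v, w)).2 = k) →
    degIn2 G c k v ≠ degIn2 G c k w

instance {n : ℕ} : DecidableRel (SimpleGraph.pathGraph n).Adj := fun _ _ =>
  decidable_of_iff _ (SimpleGraph.pathGraph_adj).symm

def pat {n : ℕ} (v : Fin n) : Fin 2 := if v.val % 4 < 2 then (0 : Fin 2) else 1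

lemma two_ne_zero_fin {n : ℕ} [NeZero n] (hn : 3 ≤ n) : (2 : Fin n) ≠ 0 := by
  intro h
  have := congrArg Fin.val h
  rw [Fin.val_zero] at this
  have h2 : ((2 : Fin n)).val = 2 % n := rfl
  rw [Nat.mod_eq_of_lt (by omega : 2 < n)] at h2
  omega

open Fin.CommRing in
lemma f_symm {n : ℕ} [NeZero n] (hn : 3 ≤ n) (v w : Fin n) :
    (if w - v = 1 then pat v else if v - w = 1 then pat w else 0) =
    (if v - w = 1 then pat w else if w - v = 1 then pat v else 0) := by
  by_cases h1 : w - v = 1 <;> by_cases h2 : v - w = 1 <;> simp [h1, h2]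
  exfalso
  apply two_ne_zero_fin hn
  have : (w - v) + (v - w) = 1 + 1 := by rw [h1, h2]
  rw [one_add_one_eq_two] at this
  simpa using this.symm

open Fin.CommRing in
theorem stmt_6' (m : ℕ) (hn : 3 ≤ m + 2) (h4 : (m + 2) % 4 = 0) :
    ∃ c : Sym2 (Fin (m + 2)) → Fin 2, IsLIC (cycleGraph (m + 2)) c := by
  set n := m + 2 with hnn
  set c : Sym2 (Fin n) → Fin 2 :=
    Sym2.lift ⟨fun v w => if w - v = 1 then pat v else if v - w = 1 then pat w else 0,
      fun v w => f_symm hn v w⟩ with hc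
  refine ⟨c, ?_⟩
  have hcc : ∀ v w : Fin n, c s(v, w) =
      (if w - v = 1 then pat v else if v - w = 1 then pat w else 0) := fun v w => rfl
  have h20 : (2 : Fin n) ≠ 0 := two_ne_zero_fin hn
  have hm1 : ∀ v : Fin n, v - 1 - v ≠ 1 := by
    intro v h
    exact h20 (by linear_combination -h)
  have hc1 : ∀ v : Fin n, c s(v, v + 1) = pat v := by
    intro v; rw [hcc, if_pos (by ring : v + 1 - v = 1)]
  have hc2 : ∀ v : Fin n, c s(v, v - 1) = pat (v - 1) := by
    intro v; rw [hcc, if_neg (hm1 v), if_pos (by ring : v - (v - 1) = 1)]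
  have hne : ∀ v : Fin n, v - 1 ≠ v + 1 := by
    intro v h
    exact h20 (by linear_combination -h)
  have key : ∀ (v : Fin n) (k : Fin 2), degIn (cycleGraph n) c k v =
      (if c s(v, v - 1) = k then 1 else 0) + (if c s(v, v + 1) = k then 1 else 0) := by
    intro v k
    have hadj_iff : ∀ w, (cycleGraph n).Adj v w ↔ (w = v - 1 ∨ w = v + 1) := by
      intro w
      rw [← SimpleGraph.mem_neighborFinset, cycleGraph_neighborFinset]
      simp
    unfold degIn
    have heq : (Finset.univ.filter fun w => (cycleGraph n).Adj v w ∧ c s(v, w) = k) =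
        ({v - 1, v + 1} : Finset (Fin n)).filter (fun w => c s(v, w) = k) := by
      ext w
      simp only [Finset.mem_filter, Finset.mem_univ, true_and, Finset.mem_insert,
        Finset.mem_singleton, hadj_iff]
    rw [heq]
    rw [show ({v - 1, v + 1} : Finset (Fin n)) = insert (v - 1) {v + 1} from rfl]
    rw [Finset.filter_insert, Finset.filter_singleton]
    by_cases p1 : c s(v, v - 1) = k <;> by_cases p2 : c s(v, v + 1) = k <;>
      simp [p1, p2, Finset.card_insert_of_notMem, hne v]
  have hdvd : 4 ∣ n := Nat.dvd_of_mod_eq_zero h4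
  have hp1 : ∀ v : Fin n, (v + 1).val % 4 = (v.val + 1) % 4 := by
    intro v
    rw [Fin.add_def, Nat.mod_mod_of_dvd _ hdvd]
    have h1v : ((1 : Fin n)).val = 1 % n := rfl
    rw [h1v, Nat.mod_eq_of_lt (by omega : 1 < n)]
  have hp2 : ∀ v : Fin n, (v - 1).val % 4 = (v.val + 3) % 4 := by
    intro v
    rw [Fin.sub_def, Nat.mod_mod_of_dvd _ hdvd]
    have h1v : ((1 : Fin n)).val = 1 % n := rfl
    rw [h1v, Nat.mod_eq_of_lt (by omega : 1 < n)]
    omega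
  have main : ∀ v : Fin n, degIn (cycleGraph n) c (pat v) v ≠
      degIn (cycleGraph n) c (pat v) (v + 1) := by
    intro v
    rw [key, key, hc2, hc1]
    have e2 : c s(v + 1, v + 1 - 1) = pat v := by
      rw [show v + 1 - 1 = v from by ring, Sym2.eq_swap, hc1]
    rw [e2, hc1 (v + 1)]
    simp only [if_pos rfl]
    have hx : v.val % 4 = 0 ∨ v.val % 4 = 1 ∨ v.val % 4 = 2 ∨ v.val % 4 = 3 := by omega
    have hv1 := hp1 v
    have hv2 := hp2 v
    simp only [pat, hv1, hv2]
    rcases hx with h | h | h | h <;>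
      [ (rw [show (v.val + 1) % 4 = 1 by omega, show (v.val + 3) % 4 = 3 by omega, h]);
        (rw [show (v.val + 1) % 4 = 2 by omega, show (v.val + 3) % 4 = 0 by omega, h]);
        (rw [show (v.val + 1) % 4 = 3 by omega, show (v.val + 3) % 4 = 1 by omega, h]);
        (rw [show (v.val + 1) % 4 = 0 by omega, show (v.val + 3) % 4 = 2 by omega, h])] <;>
      norm_num
  intro v w hadj
  rw [cycleGraph_adj'] at hadj
  rcases hadj with h | h
  · have hv : v = w + 1 := by
      have h' : v - w = 1 := by
        apply Fin.ext; simpa [Nat.mod_eq_of_lt (show 1 < n by omega)] using h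
      rw [sub_eq_iff_eq_add] at h'
      rw [h', add_comm]
    subst hv
    rw [Sym2.eq_swap, hc1]
    exact (main w).symm
  · have hw : w = v + 1 := by
      have h' : w - v = 1 := by
        apply Fin.ext; simpa [Nat.mod_eq_of_lt (show 1 < n by omega)] using h
      rw [sub_eq_iff_eq_add] at h'
      rw [h', add_comm]
    subst hw
    rw [hc1]
    exact main v

theorem stmt_6 (n : ℕ) (hn : 3 ≤ n) (h4 : n % 4 = 0) :
    ∃ c : Sym2 (Fin n) → Fin 2, IsLIC (cycleGraph n) c := by
  obtain ⟨m, rfl⟩ : ∃ m, n = m + 2 := ⟨n - 2, by omega⟩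
  exact stmt_6' m hn h4
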